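/- Let α′, β′ > 0 be real numbers and let n be an integer. Then {x ∈ ℝ : ⌊(−α′)·⌊(−β′)x⌋⌋ ≥ n} = {x ∈ ℝ : x > (⌈n/α′⌉ − 1)/β′}. -/
import Mathlib


theorem level_set_identity (α' β' : ℝ) (hα : 0 < α') (hβ : 0 < β') (n : ℤ) :
    {x : ℝ | ⌊(-α') * (⌊(-β') * x⌋ : ℝ)⌋ ≥ n} =
    {x : ℝ | x > ((⌈(n : ℝ) / α'⌉ : ℝ) - 1) / β'} := by
  ext x
  simp only [Set.mem_setOf_eq, ge_iff_le, gt_iff_lt]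
  rw [Int.le_floor]
  set m : ℤ := ⌊(-β') * x⌋ with hm
  set c : ℤ := ⌈(n : ℝ) / α'⌉ with hc
  have h1 : (n : ℝ) ≤ (-α') * m ↔ (m : ℝ) ≤ (-n : ℝ) / α' := by
    rw [le_div_iff₀ hα]
    constructor <;> intro h <;> nlinarith
  have h2 : (m : ℝ) ≤ (-n : ℝ) / α' ↔ m ≤ -c := by
    rw [show (-n : ℝ) / α' = -((n:ℝ)/α') by ring, ← Int.floor_neg, Int.le_floor]
  have h3 : m ≤ -c ↔ (-β') * x < ((-c + 1 : ℤ) : ℝ) := by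
    rw [← Int.floor_lt, hm]
    omega
  have h4 : (-β') * x < ((-c + 1 : ℤ) : ℝ) ↔ ((c : ℝ) - 1) / β' < x := by
    rw [div_lt_iff₀ hβ]
    push_cast
    constructor <;> intro h <;> nlinarith
  rw [h1, h2, h3, h4]
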